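/- Let T > 0, θ > 1 and ε₁, ε₂ > 0 satisfy ε₁ < (1 − 1/θ) · (θ ε₂)^{-1/(θ-1)}. Let f : [0,T] → ℝ be a continuous nonnegative function such that f(0) ≤ (θ ε₂)^{-1/(θ-1)} and f(t) ≤ ε₁ + ε₂ f(t)^θ for every t ∈ [0,T]. Then f(t) ≤ (θ/(θ−1)) ε₁ for every t ∈ [0,T]. -/

import Mathlib

/-- Bootstrap (continuity) argument: a continuous nonnegative function satisfying a
self-improving inequality `f t ≤ ε₁ + ε₂ f t ^ θ` with `θ > 1`, small at `t = 0`,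
stays bounded by `(θ/(θ-1)) ε₁` on `[0, T]`. -/
theorem stmt_0 (T θ ε₁ ε₂ : ℝ) (hT : 0 < T) (hθ : 1 < θ) (hε₁ : 0 < ε₁) (hε₂ : 0 < ε₂)
    (hsmall : ε₁ < (1 - 1/θ) * (θ * ε₂) ^ (-(1/(θ-1))))
    (f : ℝ → ℝ) (hcont : ContinuousOn f (Set.Icc 0 T))
    (hpos : ∀ t ∈ Set.Icc (0:ℝ) T, 0 ≤ f t)
    (hf0 : f 0 ≤ (θ * ε₂) ^ (-(1/(θ-1))))
    (hineq : ∀ t ∈ Set.Icc (0:ℝ) T, f t ≤ ε₁ + ε₂ * f t ^ θ) :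
    ∀ t ∈ Set.Icc (0:ℝ) T, f t ≤ (θ/(θ-1)) * ε₁ := by
  set M : ℝ := (θ * ε₂) ^ (-(1/(θ-1))) with hM
  have hθ0 : (0:ℝ) < θ := by linarith
  have hθ1 : θ - 1 ≠ 0 := by intro h; linarith [sub_eq_zero.mp h]
  have hMpos : 0 < M := Real.rpow_pos_of_pos (mul_pos hθ0 hε₂) _
  have hMpow : M ^ (θ - 1) = (θ * ε₂)⁻¹ := by
    rw [hM, ← Real.rpow_mul (le_of_lt (mul_pos hθ0 hε₂))]
    have : -(1/(θ-1)) * (θ-1) = -1 := by field_simp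
    rw [this, Real.rpow_neg_one]
  -- key algebraic fact
  have key : ∀ x : ℝ, 0 ≤ x → x ≤ M → x ≤ ε₁ + ε₂ * x ^ θ → x ≤ (θ/(θ-1)) * ε₁ := by
    intro x hx hxM hxineq
    have hxθ : x ^ θ ≤ M ^ (θ-1) * x := by
      have h1 : x ^ θ = x ^ (θ-1) * x := by
        have h := Real.rpow_add' hx (y := θ-1) (z := 1) (by simpa using (ne_of_gt hθ0))
        rw [show θ - 1 + 1 = θ by ring] at h
        rw [h, Real.rpow_one]
      rw [h1]
      exact mul_le_mul_of_nonneg_right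
        (Real.rpow_le_rpow hx hxM (by linarith)) hx
    rw [hMpow] at hxθ
    have h2 : ε₂ * x ^ θ ≤ x / θ := by
      have := mul_le_mul_of_nonneg_left hxθ hε₂.le
      calc ε₂ * x ^ θ ≤ ε₂ * ((θ * ε₂)⁻¹ * x) := this
        _ = x / θ := by field_simp
    have h3 : x ≤ ε₁ + x / θ := le_trans hxineq (by linarith)
    rw [div_mul_eq_mul_div, le_div_iff₀ (by linarith : (0:ℝ) < θ - 1)]
    have hxt : x / θ * θ = x := div_mul_cancel₀ x (ne_of_gt hθ0)
    nlinarith [mul_le_mul_of_nonneg_right h3 hθ0.le]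
  have hBM : (θ/(θ-1)) * ε₁ < M := by
    have h1 : (θ/(θ-1)) * ε₁ < (θ/(θ-1)) * ((1 - 1/θ) * M) :=
      mul_lt_mul_of_pos_left hsmall (div_pos hθ0 (by linarith))
    have : (θ/(θ-1)) * ((1 - 1/θ) * M) = M := by field_simp
    linarith [h1, this.le, this.ge]
  intro t ht
  by_contra hcon
  push_neg at hcon
  have h0T : (0:ℝ) ∈ Set.Icc (0:ℝ) T := ⟨le_refl _, hT.le⟩
  have hf0B : f 0 ≤ (θ/(θ-1)) * ε₁ := key _ (hpos 0 h0T) hf0 (hineq 0 h0T)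
  have hftM : M < f t := by
    by_contra h
    push_neg at h
    exact absurd (key _ (hpos t ht) h (hineq t ht)) (not_le.mpr hcon)
  -- IVT on [0, t]
  have hsub : Set.Icc (0:ℝ) t ⊆ Set.Icc (0:ℝ) T := Set.Icc_subset_Icc le_rfl ht.2
  have hivt := intermediate_value_Icc ht.1 (hcont.mono hsub)
  have hMmem : M ∈ Set.Icc (f 0) (f t) := ⟨by linarith, hftM.le⟩
  obtain ⟨s, hs, hfs⟩ := hivt hMmem
  have := key _ (hpos s (hsub hs)) (le_of_eq hfs) (hineq s (hsub hs))
  rw [hfs] at this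
  linarith
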